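/- Let S be a semigroup satisfying the identity x·y·z·x·y = x·y for all x, y, z ∈ S, and suppose that for all x, y, z, u, w ∈ S, x·y·z = x·y·w·z or x·y·z = x·u·y·z. Then for all x, y, z, u, v, w ∈ S, x·y·z·u = x·z·u or v·z·w·u = v·z·u. -/
import Mathlib


theorem stmt_6 {S : Type*} [Semigroup S]
    (hGRB : ∀ x y z : S, x * y * z * x * y = x * y)
    (hI : ∀ x y z u w : S, x * y * z = x * y * w * z ∨ x * y * z = x * u * y * z) :
    ∀ x y z u v w : S, x * y * z * u = x * z * u ∨ v * z * w * u = v * z * u := by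
  intro x y z u v w
  rcases hI x z u y w with h1 | h1
  · -- h1 : x*z*u = x*z*w*u
    rcases hI v z u x w with h2 | h2
    · right; exact h2.symm
    · -- h2 : v*z*u = v*x*z*u
      rcases hI v z u (z * x) w with h3 | h3
      · right; exact h3.symm
      · -- h3 : v*z*u = v*(z*x)*z*u
        rcases hI v z w x (x * z) with h4 | h4
        · -- h4 : v*z*w = v*z*(x*z)*w
          right
          calc v * z * w * u = v * z * (x * z) * w * u := by rw [← h4]
            _ = v * z * (x * z * w * u) := by simp only [mul_assoc]
            _ = v * z * (x * z * u) := by rw [← h1]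
            _ = v * (z * x) * z * u := by simp only [mul_assoc]
            _ = v * z * u := h3.symm
        · -- h4 : v*z*w = v*x*z*w
          right
          calc v * z * w * u = v * x * z * w * u := by rw [← h4]
            _ = v * (x * z * w * u) := by simp only [mul_assoc]
            _ = v * (x * z * u) := by rw [← h1]
            _ = v * x * z * u := by simp only [mul_assoc]
            _ = v * z * u := h2.symm
  · -- h1 : x*z*u = x*y*z*u
    left; exact h1.symm
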